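/- For every connected graph $G$ on $n \geq 1$ vertices and every $k \in \{1,\dots,n\}$, the number of vertex subsets of size $k$ that induce a connected subgraph is at least $n-k+1$. -/

import Mathlib

open Finset
open scoped Classical

/-- The node reliability polynomial of a graph `G`: the probability that the set of
operational nodes is nonempty and induces a connected subgraph, when each node
operates independently with probability `p`. -/
noncomputable def nRel {V : Type*} [Fintype V] (G : SimpleGraph V) (p : ℝ) : ℝ :=
  ∑ s : Finset V, if (G.induce (s : Set V)).Connected
    then p ^ s.card * (1 - p) ^ (Fintype.card V - s.card) else 0

/-- `cCount G k` is the number of `k`-element vertex subsets of `G` inducing a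
connected subgraph (note: `SimpleGraph.Connected` requires nonemptiness). -/
noncomputable def cCount {V : Type*} [Fintype V] (G : SimpleGraph V) (k : ℕ) : ℕ :=
  ((Finset.univ : Finset (Finset V)).filter
    (fun s : Finset V => s.card = k ∧ (G.induce (s : Set V)).Connected)).card


lemma singleton_connected {V : Type*} (G : SimpleGraph V) (y : V) :
    (G.induce ({y} : Set V)).Connected := by
  rw [SimpleGraph.connected_iff]
  refine ⟨fun a b => ?_, ⟨⟨y, rfl⟩⟩⟩
  have : a = b := Subtype.ext (by
    have ha := a.2; have hb := b.2
    simp only [Set.mem_singleton_iff] at ha hb; rw [ha, hb])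
  rw [this]

lemma grow_in {V : Type*} [Fintype V] (G : SimpleGraph V) {s : Finset V}
    (hs : (G.induce (s : Set V)).Connected) {v : V} (hv : v ∈ s)
    (k : ℕ) (hk1 : 1 ≤ k) (hks : k ≤ s.card) :
    ∃ t : Finset V, t ⊆ s ∧ v ∈ t ∧ t.card = k ∧ (G.induce (t : Set V)).Connected := by
  induction k with
  | zero => omega
  | succ m ih =>
    rcases Nat.eq_or_lt_of_le hk1 with h1 | h1
    · refine ⟨{v}, by simpa using hv, mem_singleton_self v, by simp [← h1], ?_⟩
      rw [Finset.coe_singleton]; exact singleton_connected G v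
    · obtain ⟨t, hts, hvt, hcard, hconn⟩ := ih (by omega) (by omega)
      -- find u ∈ s \ t
      have hne : ∃ u ∈ s, u ∉ t := by
        by_contra h
        push_neg at h
        have : s ⊆ t := h
        have := Finset.card_le_card this
        omega
      obtain ⟨u, hus, hut⟩ := hne
      obtain ⟨p⟩ := hs.preconnected ⟨v, hv⟩ ⟨u, hus⟩
      obtain ⟨d, _, hd1, hd2⟩ := p.exists_boundary_dart {x : (s : Set V) | ↑x ∈ t}
        (by simpa using hvt) (by simpa using hut)
      have hadj : G.Adj ↑d.fst ↑d.snd := d.adj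
      refine ⟨insert ↑d.snd t, ?_, Finset.mem_insert_of_mem hvt, ?_, ?_⟩
      · exact Finset.insert_subset d.snd.2 hts
      · rw [Finset.card_insert_of_notMem hd2, hcard]
      · have : ((insert (↑d.snd) t : Finset V) : Set V) = (t : Set V) ∪ {↑d.snd} := by
          rw [Finset.coe_insert, Set.insert_eq, Set.union_comm]
        rw [this]
        exact SimpleGraph.connected_induce_union hconn.preconnected (singleton_connected G _).preconnected
          hd1 rfl hadj

lemma grow {V : Type*} [Fintype V] (G : SimpleGraph V) (hG : G.Connected) {s : Finset V}
    (hs : (G.induce (s : Set V)).Connected) (hcard : s.card < Fintype.card V) :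
    ∃ y ∉ s, (G.induce ((insert y s : Finset V) : Set V)).Connected := by
  obtain ⟨⟨v, hv⟩⟩ := hs.nonempty
  have hne : ∃ u, u ∉ s := by
    by_contra h
    push_neg at h
    have : (Finset.univ : Finset V) ⊆ s := fun x _ => h x
    have := Finset.card_le_card this
    simp [Finset.card_univ] at this
    omega
  obtain ⟨u, hus⟩ := hne
  obtain ⟨p⟩ := hG.preconnected v u
  obtain ⟨d, _, hd1, hd2⟩ := p.exists_boundary_dart (s : Set V) (by simpa using hv)
    (by simpa using hus)
  refine ⟨d.snd, by simpa using hd2, ?_⟩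
  have : ((insert d.snd s : Finset V) : Set V) = (s : Set V) ∪ {d.snd} := by
    rw [Finset.coe_insert, Set.insert_eq, Set.union_comm]
  rw [this]
  exact SimpleGraph.connected_induce_union hs.preconnected (singleton_connected G _).preconnected hd1 rfl d.adj

lemma univ_induce_connected {V : Type*} [Fintype V] (G : SimpleGraph V) (hG : G.Connected) :
    (G.induce ((Finset.univ : Finset V) : Set V)).Connected := by
  rw [Finset.coe_univ]
  exact (SimpleGraph.induceUnivIso G).connected_iff.mpr hG

lemma chain {V : Type*} [Fintype V] (G : SimpleGraph V) (hG : G.Connected)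
    (k : ℕ) (hk1 : 1 ≤ k) :
    ∀ m, k ≤ m → m ≤ Fintype.card V →
    ∃ (s : Finset V) (T : Finset (Finset V)), s.card = m ∧
      (G.induce (s : Set V)).Connected ∧ T.card = m - k + 1 ∧
      ∀ t ∈ T, t ⊆ s ∧ t.card = k ∧ (G.induce (t : Set V)).Connected := by
  intro m
  induction m with
  | zero => intro h1 _; omega
  | succ m ih =>
    intro hkm hmn
    rcases Nat.eq_or_lt_of_le hkm with heq | hlt
    · -- base: k = m + 1
      obtain ⟨v⟩ := hG.nonempty
      obtain ⟨t, _, _, htc, htconn⟩ := grow_in G (univ_induce_connected G hG)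
        (Finset.mem_univ v) k hk1 (by rw [Finset.card_univ]; omega)
      refine ⟨t, {t}, by omega, htconn, by simp; omega, ?_⟩
      intro u hu
      rw [Finset.mem_singleton] at hu
      subst hu
      exact ⟨subset_refl _, htc, htconn⟩
    · have hkm' : k ≤ m := by omega
      obtain ⟨s, T, hsc, hsconn, hTc, hT⟩ := ih hkm' (by omega)
      obtain ⟨y, hys, hconn'⟩ := grow G hG hsconn (by omega)
      obtain ⟨t', ht's, hyt', ht'c, ht'conn⟩ := grow_in G hconn'
        (Finset.mem_insert_self y s) k hk1
        (by rw [Finset.card_insert_of_notMem hys]; omega)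
      have ht'T : t' ∉ T := by
        intro h
        exact hys ((hT t' h).1 hyt')
      refine ⟨insert y s, insert t' T, ?_, hconn', ?_, ?_⟩
      · rw [Finset.card_insert_of_notMem hys]; omega
      · rw [Finset.card_insert_of_notMem ht'T]; omega
      · intro u hu
        rcases Finset.mem_insert.mp hu with h | h
        · subst h; exact ⟨ht's, ht'c, ht'conn⟩
        · obtain ⟨h1, h2, h3⟩ := hT u h
          exact ⟨h1.trans (Finset.subset_insert _ _), h2, h3⟩

theorem stmt0 {V : Type*} [Fintype V] (G : SimpleGraph V) (hG : G.Connected)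
    (n : ℕ) (hn : n = Fintype.card V) (hn1 : 1 ≤ n)
    (k : ℕ) (hk1 : 1 ≤ k) (hkn : k ≤ n) :
    n - k + 1 ≤ cCount G k := by
  obtain ⟨s, T, _, _, hTc, hT⟩ := chain G hG k hk1 n hkn (le_of_eq hn)
  rw [← hTc]
  apply Finset.card_le_card
  intro t ht
  obtain ⟨_, h2, h3⟩ := hT t ht
  exact Finset.mem_filter.mpr ⟨Finset.mem_univ _, h2, h3⟩
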